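/- Let I₁(x,y,z) = xz − y²/2 − x³/3 and I₂(x,y,z) = x²/2 − z. Then ∇I₁ × ∇I₂ = (y, z, xy), the Ishii flow vector field; hence the Ishii flow is a Nambu system with Hamiltonians I₁, I₂. -/

import Mathlib

/-- Partial derivative in the first variable. -/
noncomputable def pd1 (f : ℝ → ℝ → ℝ → ℝ) (x y z : ℝ) : ℝ := deriv (fun t => f t y z) x
/-- Partial derivative in the second variable. -/
noncomputable def pd2 (f : ℝ → ℝ → ℝ → ℝ) (x y z : ℝ) : ℝ := deriv (fun t => f x t z) y
/-- Partial derivative in the third variable. -/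
noncomputable def pd3 (f : ℝ → ℝ → ℝ → ℝ) (x y z : ℝ) : ℝ := deriv (fun t => f x y t) z
/-- Gradient in ℝ³. -/
noncomputable def grad (f : ℝ → ℝ → ℝ → ℝ) (x y z : ℝ) : ℝ × ℝ × ℝ :=
  (pd1 f x y z, pd2 f x y z, pd3 f x y z)
/-- Cross product in ℝ³. -/
def cross (a b : ℝ × ℝ × ℝ) : ℝ × ℝ × ℝ :=
  (a.2.1 * b.2.2 - a.2.2 * b.2.1, a.2.2 * b.1 - a.1 * b.2.2, a.1 * b.2.1 - a.2.1 * b.1)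
/-- Dot product in ℝ³. -/
def dot (a b : ℝ × ℝ × ℝ) : ℝ := a.1 * b.1 + a.2.1 * b.2.1 + a.2.2 * b.2.2
/-- Curl of a vector field (h₁,h₂,h₃) on ℝ³. -/
noncomputable def curl3 (h₁ h₂ h₃ : ℝ → ℝ → ℝ → ℝ) (x y z : ℝ) : ℝ × ℝ × ℝ :=
  (pd2 h₃ x y z - pd3 h₂ x y z, pd3 h₁ x y z - pd1 h₃ x y z, pd1 h₂ x y z - pd2 h₁ x y z)
/-- Divergence of a vector field on ℝ³. -/
noncomputable def div3 (X₁ X₂ X₃ : ℝ → ℝ → ℝ → ℝ) (x y z : ℝ) : ℝ :=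
  pd1 X₁ x y z + pd2 X₂ x y z + pd3 X₃ x y z
/-- Nambu bracket {H,F,G} = ∇H · (∇F × ∇G). -/
noncomputable def nambu (H F G : ℝ → ℝ → ℝ → ℝ) (x y z : ℝ) : ℝ :=
  dot (grad H x y z) (cross (grad F x y z) (grad G x y z))

/-- For I₁ = xz − y²/2 − x³/3 and I₂ = x²/2 − z, we have
∇I₁ × ∇I₂ = (y, z, xy), the Ishii flow vector field. -/
theorem stmt19 :
    ∀ x y z : ℝ,
      cross (grad (fun a b c => a * c - b ^ 2 / 2 - a ^ 3 / 3) x y z)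
            (grad (fun a b c => a ^ 2 / 2 - c) x y z) = (y, z, x * y) := by
  intro x y z
  have h1 : deriv (fun t : ℝ => t * z - y ^ 2 / 2 - t ^ 3 / 3) x = z - x ^ 2 := by
    have : HasDerivAt (fun t : ℝ => t * z - y ^ 2 / 2 - t ^ 3 / 3) (z - x ^ 2) x := by
      have := (((hasDerivAt_id x).mul_const z).sub_const (y ^ 2 / 2)).sub
        ((hasDerivAt_pow 3 x).div_const 3)
      refine this.congr_deriv ?_; push_cast; ring
    exact this.deriv
  have h2 : deriv (fun t : ℝ => x * z - t ^ 2 / 2 - x ^ 3 / 3) y = -y := by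
    have : HasDerivAt (fun t : ℝ => x * z - t ^ 2 / 2 - x ^ 3 / 3) (-y) y := by
      have := (((hasDerivAt_pow 2 y).div_const 2).const_sub (x * z)).sub_const (x ^ 3 / 3)
      refine this.congr_deriv ?_; push_cast; ring
    exact this.deriv
  have h3 : deriv (fun t : ℝ => x * t - y ^ 2 / 2 - x ^ 3 / 3) z = x := by
    have : HasDerivAt (fun t : ℝ => x * t - y ^ 2 / 2 - x ^ 3 / 3) x z := by
      have := (((hasDerivAt_id z).const_mul x).sub_const (y ^ 2 / 2)).sub_const (x ^ 3 / 3)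
      simpa using this
    exact this.deriv
  have h4 : deriv (fun t : ℝ => t ^ 2 / 2 - z) x = x := by
    have : HasDerivAt (fun t : ℝ => t ^ 2 / 2 - z) x x := by
      have := ((hasDerivAt_pow 2 x).div_const 2).sub_const z
      refine this.congr_deriv ?_; push_cast; ring
    exact this.deriv
  have h5 : deriv (fun t : ℝ => x ^ 2 / 2 - t) z = -1 := by
    have : HasDerivAt (fun t : ℝ => x ^ 2 / 2 - t) (-1) z := (hasDerivAt_id z).const_sub _
    exact this.deriv
  have h6 : deriv (fun _ : ℝ => x ^ 2 / 2 - z) y = 0 := deriv_const y _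
  simp only [cross, grad, pd1, pd2, pd3, h1, h2, h3, h4, h5, h6]
  norm_num
  constructor <;> ring
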